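/- For every associative Lyndon–Shirshov word w, the standard bracketing [w], defined recursively by bracketing off the longest proper associative Lyndon–Shirshov suffix, is a nonassociative Lyndon–Shirshov word whose leading associative monomial (under deg-lex, after expanding commutators in k⟨X⟩) equals w, with coefficient 1. -/

import Mathlib

noncomputable section

variable {X : Type*} [LinearOrder X] (k : Type*) [Field k]

def llt : List X → List X → Prop
  | [], _ => False
  | _ :: _, [] => True
  | a :: u, b :: v => a < b ∨ (a = b ∧ llt u v)

def IsLS (w : List X) : Prop :=
  w ≠ [] ∧ ∀ u v : List X, u ≠ [] → v ≠ [] → w = u ++ v → llt (v ++ u) w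

/-- deg-lex order -/
def dlt (u v : List X) : Prop :=
  u.length < v.length ∨ (u.length = v.length ∧ llt u v)

/-- the free associative algebra with basis the free monoid on X -/
abbrev FA (k : Type*) [Field k] (X : Type*) := MonoidAlgebra k (FreeMonoid X)

/-- the generators x ∈ X inside the free associative algebra -/
def gens : Set (FA k X) := Set.range fun x : X => MonoidAlgebra.single (FreeMonoid.of x) (1 : k)

/-- the leading (deg-lex maximal) monomial of f is w -/
def IsLeading (f : FA k X) (w : List X) : Prop :=
  f.coeff (FreeMonoid.ofList w) ≠ 0 ∧ ∀ v : List X, f.coeff (FreeMonoid.ofList v) ≠ 0 → v = w ∨ dlt v w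

/-- underlying associative word of a nonassociative word -/
def mword : FreeMagma X → List X
  | .of x => [x]
  | .mul a b => mword a ++ mword b

/-- evaluation of a nonassociative word in the free associative algebra
via the commutator bracket -/
def evalM : FreeMagma X → FA k X
  | .of x => MonoidAlgebra.single (FreeMonoid.of x) 1
  | .mul a b => evalM a * evalM b - evalM b * evalM a

/-- nonassociative Lyndon--Shirshov word -/
def IsNLS : FreeMagma X → Prop
  | .of _ => True
  | .mul a b => IsNLS a ∧ IsNLS b ∧ IsLS (mword a ++ mword b) ∧
      (match a with
        | .of _ => True
        | .mul _ a2 => ¬ llt (mword b) (mword a2))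

/-- standard bracketing tree: at each node the right factor is the longest
proper Lyndon--Shirshov suffix -/
def IsStd : FreeMagma X → Prop
  | .of _ => True
  | .mul a b => IsStd a ∧ IsStd b ∧ IsLS (mword a ++ mword b) ∧ IsLS (mword b) ∧
      ∀ s : List X, s ≠ [] → s ≠ mword a ++ mword b → s <:+ mword a ++ mword b →
        IsLS s → s.length ≤ (mword b).length

/-- flattening of a tree of trees -/
def mjoin : FreeMagma (FreeMagma X) → FreeMagma X
  | .of t => t
  | .mul a b => .mul (mjoin a) (mjoin b)

/-- the list of leaves of a binary tree -/
def leaves {α : Type*} : FreeMagma α → List α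
  | .of x => [x]
  | .mul a b => leaves a ++ leaves b

/-- `Occurs s t p` : `s` occurs as a subtree of `t` with exactly the word `p`
to its left -/
def Occurs (s : FreeMagma X) : FreeMagma X → List X → Prop
  | .of x, p => s = .of x ∧ p = []
  | .mul l r, p => (s = .mul l r ∧ p = []) ∨ Occurs s l p ∨
      ∃ q, Occurs s r q ∧ p = mword l ++ q



theorem not_llt_nil (u : List X) : ¬ llt [] u := by simp [llt]

theorem llt_nil_iff (u : List X) : llt u [] ↔ u ≠ [] := by
  cases u <;> simp [llt]

theorem llt_irrefl : ∀ u : List X, ¬ llt u u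
  | [] => by simp [llt]
  | a :: u => by
      rintro (h | ⟨-, h⟩)
      · exact lt_irrefl a h
      · exact llt_irrefl u h

theorem llt_trans : ∀ u v w : List X, llt u v → llt v w → llt u w
  | [], _, _, h, _ => absurd h (not_llt_nil _)
  | _ :: _, [], _, _, h => absurd h (not_llt_nil _)
  | _ :: _, _ :: _, [], _, _ => by simp [llt]
  | a :: u, b :: v, c :: w, h1, h2 => by
      simp only [llt] at h1 h2 ⊢
      rcases h1 with h1 | ⟨rfl, h1⟩
      · rcases h2 with h2 | ⟨rfl, h2⟩
        · exact Or.inl (h1.trans h2)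
        · exact Or.inl h1
      · rcases h2 with h2 | ⟨rfl, h2⟩
        · exact Or.inl h2
        · exact Or.inr ⟨rfl, llt_trans u v w h1 h2⟩

theorem llt_total : ∀ u v : List X, u ≠ v → llt u v ∨ llt v u
  | [], [], h => absurd rfl h
  | [], _ :: _, _ => Or.inr (by simp [llt])
  | _ :: _, [], _ => Or.inl (by simp [llt])
  | a :: u, b :: v, h => by
      rcases lt_trichotomy a b with hab | rfl | hab
      · exact Or.inl (Or.inl hab)
      · have : u ≠ v := fun h' => h (by rw [h'])
        rcases llt_total u v this with h' | h'
        · exact Or.inl (Or.inr ⟨rfl, h'⟩)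
        · exact Or.inr (Or.inr ⟨rfl, h'⟩)
      · exact Or.inr (Or.inl hab)

theorem llt_append_left : ∀ (x a b : List X), llt (x ++ a) (x ++ b) ↔ llt a b
  | [], _, _ => Iff.rfl
  | c :: x, a, b => by simp [llt, llt_append_left x a b]

theorem llt_ext : ∀ (p q a b : List X), p.length = q.length → llt p q →
    llt (p ++ a) (q ++ b)
  | [], [], _, _, _, h => absurd h (not_llt_nil _)
  | [], _ :: _, _, _, hl, _ => by simp at hl
  | _ :: _, [], _, _, hl, _ => by simp at hl
  | c :: p, d :: q, a, b, hl, h => by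
      simp only [llt] at h ⊢
      rcases h with h | ⟨rfl, h⟩
      · exact Or.inl h
      · exact Or.inr ⟨rfl, llt_ext p q a b (by simpa using hl) h⟩

theorem llt_take_iff : ∀ (x z : List X), x.length ≤ z.length →
    (llt x z ↔ llt x (z.take x.length))
  | [], _, _ => by simp [llt]
  | a :: x, [], h => by simp at h
  | a :: x, b :: z, h => by
      simp only [List.length_cons, List.take_succ_cons, llt]
      rw [llt_take_iff x z (by simpa using h)]

theorem llt_split {x y z : List X} (h : llt (x ++ y) z) (hl : x.length ≤ z.length) :
    llt x z ∨ (x = z.take x.length ∧ llt y (z.drop x.length)) := by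
  by_cases hx : x = z.take x.length
  · right
    refine ⟨hx, ?_⟩
    have hz : z = x ++ z.drop x.length := by
      conv_lhs => rw [← List.take_append_drop x.length z, ← hx]
    rw [hz, llt_append_left] at h
    exact h
  · left
    have hlen : x.length = (z.take x.length).length := by
      rw [List.length_take]; omega
    rcases llt_total x (z.take x.length) hx with h' | h'
    · exact (llt_take_iff x z hl).2 h'
    · exfalso
      have : llt (z.take x.length ++ z.drop x.length) (x ++ y) := llt_ext _ _ _ _ hlen.symm h'
      rw [List.take_append_drop] at this
      exact llt_irrefl _ (llt_trans _ _ _ h this)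

theorem suffix_split {s x y : List X} (h : s <:+ x ++ y) :
    (s.length ≤ y.length ∧ s <:+ y) ∨ ∃ x₂, x₂ <:+ x ∧ s = x₂ ++ y := by
  obtain ⟨t, ht⟩ := h
  have hlen : t.length + s.length = x.length + y.length := by
    have := congrArg List.length ht; simpa using this
  by_cases hl : s.length ≤ y.length
  · left
    refine ⟨hl, ?_⟩
    have h1 : t.length = x.length + (y.length - s.length) := by omega
    have h2 : s = y.drop (y.length - s.length) := by
      have : (t ++ s).drop t.length = (x ++ y).drop (x.length + (y.length - s.length)) := by
        rw [ht, h1]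
      rw [List.drop_length_add_append, List.drop_left] at this
      exact this
    rw [h2]; exact List.drop_suffix _ _
  · right
    push_neg at hl
    have h1 : s.drop (s.length - y.length) = y := by
      have h2 : (t ++ s).drop (t.length + (s.length - y.length)) =
          (x ++ y).drop x.length := by rw [ht]; congr 1; omega
      rw [List.drop_length_add_append, List.drop_left] at h2
      exact h2
    refine ⟨s.take (s.length - y.length), ?_, ?_⟩
    · have h3 : (t ++ s.take (s.length - y.length)) ++ y = x ++ y := by
        calc (t ++ s.take (s.length - y.length)) ++ y
            = t ++ (s.take (s.length - y.length) ++ s.drop (s.length - y.length)) := by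
              rw [h1, List.append_assoc]
          _ = t ++ s := by rw [List.take_append_drop]
          _ = x ++ y := ht
      exact ⟨t, List.append_cancel_right h3⟩
    · conv_lhs => rw [← List.take_append_drop (s.length - y.length) s, h1]

theorem isLS_iff_suffix (w : List X) :
    IsLS w ↔ w ≠ [] ∧ ∀ s : List X, s ≠ [] → s ≠ w → s <:+ w → llt s w := by
  constructor
  · rintro ⟨hne, hrot⟩
    refine ⟨hne, fun s hs hsw hsuf => ?_⟩
    obtain ⟨u, hu⟩ := hsuf
    have hune : u ≠ [] := by rintro rfl; exact hsw (by simpa using hu)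
    have h1 : llt (s ++ u) w := hrot u s hune hs hu.symm
    have hls : s.length ≤ w.length := by
      have := congrArg List.length hu; simp at this; omega
    rcases llt_split h1 hls with h | ⟨heq, h⟩
    · exact h
    · exfalso
      set t := w.drop s.length with htdef
      have hw2 : w = s ++ t := by rw [heq]; exact (List.take_append_drop _ _).symm
      have htne : t ≠ [] := by
        intro h'
        have e1 := congrArg List.length hw2
        rw [h'] at e1
        simp only [List.append_nil] at e1
        have e2 := congrArg List.length hu
        simp only [List.length_append] at e2
        have hu0 : u.length = 0 := by omega
        exact hune (List.length_eq_zero_iff.1 hu0)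
      have h2 : llt (t ++ s) w := hrot s t hs htne hw2
      have hul : u.length = t.length := by
        have h3 := congrArg List.length hu
        have h4 := congrArg List.length hw2
        simp at h3 h4; omega
      have h5 : llt (u ++ s) (t ++ s) := llt_ext _ _ _ _ hul h
      rw [hu] at h5
      exact llt_irrefl _ (llt_trans _ _ _ h5 h2)
  · rintro ⟨hne, hsuf⟩
    refine ⟨hne, fun u v hu hv huv => ?_⟩
    have hvsuf : v <:+ w := ⟨u, huv.symm⟩
    have hvw : v ≠ w := by
      intro h'
      have hlen := congrArg List.length huv
      rw [h'] at hlen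
      simp only [List.length_append] at hlen
      exact hu (List.length_eq_zero_iff.1 (by omega))
    have h1 : llt v w := hsuf v hv hvw hvsuf
    have hls : v.length ≤ w.length := hvsuf.length_le
    have h2 : llt v (w.take v.length) := (llt_take_iff v w hls).1 h1
    have h3 : llt (v ++ u) (w.take v.length ++ w.drop v.length) := by
      apply llt_ext _ _ _ _ _ h2
      rw [List.length_take]; omega
    rwa [List.take_append_drop] at h3

theorem isLS_singleton (x : X) : IsLS [x] := by
  refine ⟨by simp, fun u v hu hv huv => ?_⟩
  exfalso
  have := congrArg List.length huv
  simp at this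
  have hu' := List.length_pos_iff.2 hu
  have hv' := List.length_pos_iff.2 hv
  omega

theorem isLS_length_one {w : List X} (h : w.length = 1) : IsLS w := by
  obtain ⟨a, rfl⟩ := List.length_eq_one_iff.1 h
  exact isLS_singleton a

/-- concatenation lemma: if `a`, `b` are LS and `b ≺ a` then `a ++ b` is LS -/
theorem isLS_append {a b : List X} (ha : IsLS a) (hb : IsLS b) (hab : llt b a) :
    IsLS (a ++ b) := by
  have hane : a ≠ [] := ha.1
  have hbne : b ≠ [] := hb.1
  rw [isLS_iff_suffix]
  refine ⟨by simp [hane], fun t ht htw htsuf => ?_⟩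
  -- first: llt b (a ++ b)
  have hba : llt b (a ++ b) := by
    by_cases hlb : b.length ≤ a.length
    · have h1 : llt b (a.take b.length) := (llt_take_iff b a hlb).1 hab
      have h2 : llt b ((a ++ b).take b.length) := by
        rwa [List.take_append_of_le_length hlb]
      exact (llt_take_iff b (a ++ b) (by simp)).2 h2
    · push_neg at hlb
      have hsplit := llt_split (x := b.take a.length) (y := b.drop a.length) (z := a)
        (by rw [List.take_append_drop]; exact hab) (by rw [List.length_take]; omega)
      rcases hsplit with h | ⟨heq, h⟩
      · have h2 := llt_ext (b.take a.length) a (b.drop a.length) b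
          (by rw [List.length_take]; omega) h
        rwa [List.take_append_drop] at h2
      · have hlen : (b.take a.length).length = a.length := by rw [List.length_take]; omega
        rw [hlen, List.take_length] at heq
        have hb2 : b = a ++ b.drop a.length := by
          conv_lhs => rw [← List.take_append_drop a.length b, heq]
        have hb1ne : b.drop a.length ≠ [] := by
          rw [← List.length_pos_iff, List.length_drop]; omega
        have hprop : b.drop a.length ≠ b := by
          intro h'
          have h3 := congrArg List.length h'
          rw [List.length_drop] at h3
          have := List.length_pos_iff.2 hane; omega
        have hlt : llt (b.drop a.length) b :=
          ((isLS_iff_suffix b).1 hb).2 _ hb1ne hprop (List.drop_suffix _ _)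
        conv_lhs => rw [hb2]
        rw [llt_append_left]
        exact hlt
  rcases suffix_split htsuf with ⟨hlt, hts⟩ | ⟨a₂, ha₂, rfl⟩
  · by_cases htb : t = b
    · rw [htb]; exact hba
    · exact llt_trans _ _ _ (((isLS_iff_suffix b).1 hb).2 t ht htb hts) hba
  · by_cases ha2nil : a₂ = []
    · rw [ha2nil]; simpa using hba
    · have ha2a : a₂ ≠ a := by rintro rfl; exact htw rfl
      have h1 : llt a₂ a := ((isLS_iff_suffix a).1 ha).2 a₂ ha2nil ha2a ha₂
      have h2 : llt a₂ (a.take a₂.length) :=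
        (llt_take_iff a₂ a ha₂.length_le).1 h1
      have h3 : llt (a₂ ++ b) (a.take a₂.length ++ (a.drop a₂.length ++ b)) := by
        apply llt_ext _ _ _ _ _ h2
        rw [List.length_take]
        have := ha₂.length_le; omega
      rwa [← List.append_assoc, List.take_append_drop] at h3
/-- if `w = u ++ v` is LS and `v` is the longest proper LS suffix, then `u` is LS -/
theorem isLS_left_factor {w u v : List X} (hw : IsLS w) (hv : IsLS v)
    (huv : u ++ v = w) (hune : u ≠ [])
    (hmax : ∀ s : List X, s ≠ [] → s ≠ w → s <:+ w → IsLS s → s.length ≤ v.length) :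
    IsLS u := by
  have hvne : v ≠ [] := hv.1
  have hwc := (isLS_iff_suffix w).1 hw
  have hvc := (isLS_iff_suffix v).1 hv
  have hulen : 0 < u.length := List.length_pos_iff.2 hune
  have hvlen : 0 < v.length := List.length_pos_iff.2 hvne
  have hwlen : w.length = u.length + v.length := by
    rw [← huv]; simp
  have key : ∀ n : ℕ, ∀ s : List X, s.length = n → s ≠ [] → s ≠ u → s <:+ u → llt s u := by
    intro n
    induction n using Nat.strong_induction_on with
    | _ n IH =>
      rintro s rfl hs hsu hssuf
      by_contra hbad
      have hs0 : 0 < s.length := List.length_pos_iff.2 hs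
      have hslen : s.length < u.length := by
        rcases lt_or_eq_of_le hssuf.length_le with h | h
        · exact h
        · exact absurd (hssuf.eq_of_length h) hsu
      obtain ⟨r, hr⟩ := hssuf
      have hsvsuf : s ++ v <:+ w := ⟨r, by rw [← List.append_assoc, hr, huv]⟩
      have hsvne : s ++ v ≠ [] := by simp [hs]
      have hsvw : s ++ v ≠ w := by
        intro h'
        have := congrArg List.length h'
        simp only [List.length_append] at this
        omega
      have h1 : llt (s ++ v) w := hwc.2 _ hsvne hsvw hsvsuf
      have h3eq : w.take s.length = u.take s.length := by
        rw [← huv, List.take_append_of_le_length (le_of_lt hslen)]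
      -- deduce s = w.take s.length
      have hsw : s = w.take s.length := by
        rcases llt_split h1 (by omega) with h | ⟨h, -⟩
        · exfalso
          apply hbad
          have h2 : llt s (w.take s.length) := (llt_take_iff s w (by omega)).1 h
          rw [h3eq] at h2
          exact (llt_take_iff s u (le_of_lt hslen)).2 h2
        · exact h
      have hsu' : s = u.take s.length := hsw.trans h3eq
      have htake : ∀ j : ℕ, j ≤ s.length → (s ++ v).take j = w.take j := by
        intro j hj
        rw [← huv, List.take_append_of_le_length hj,
          List.take_append_of_le_length (by omega)]
        conv_lhs => rw [hsu']
        rw [List.take_take, min_eq_left hj]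
      -- show s ++ v is LS, contradicting maximality of v
      have hls : IsLS (s ++ v) := by
        rw [isLS_iff_suffix]
        refine ⟨hsvne, fun t ht htsv htsuf => ?_⟩
        rcases suffix_split htsuf with ⟨htl, hts⟩ | ⟨s₂, hs₂, rfl⟩
        · -- t is a suffix of v; use llt t w and split at position s.length
          have htw : llt t w := by
            apply hwc.2 t ht ?_ (hts.trans ⟨u, huv⟩)
            intro h'
            have := congrArg List.length h'
            omega
          by_cases hcase : t.length ≤ s.length
          · have h2 : llt t ((s ++ v).take t.length) := by
              rw [htake t.length hcase]
              exact (llt_take_iff t w (by omega)).1 htw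
            exact (llt_take_iff t (s ++ v)
              (by simp only [List.length_append]; omega)).2 h2
          · push_neg at hcase
            have hl3 : (t.take s.length).length = s.length := by
              rw [List.length_take]; omega
            have hsplit := llt_split (x := t.take s.length) (y := t.drop s.length) (z := w)
              (by rw [List.take_append_drop]; exact htw) (by rw [hl3]; omega)
            rcases hsplit with h2 | ⟨h2, -⟩
            · have h3 : llt (t.take s.length) (w.take s.length) := by
                have h3' := (llt_take_iff _ w (by rw [hl3]; omega)).1 h2
                rwa [hl3] at h3'
              rw [← hsw] at h3
              have h4 : llt (t.take s.length ++ t.drop s.length) (s ++ v) :=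
                llt_ext _ _ _ _ (by rw [hl3]) h3
              rwa [List.take_append_drop] at h4
            · rw [hl3, ← hsw] at h2
              have h5 : t.drop s.length <:+ v := (List.drop_suffix _ _).trans hts
              have h6 : t.drop s.length ≠ [] := by
                rw [← List.length_pos_iff, List.length_drop]; omega
              have h7 : t.drop s.length ≠ v := by
                intro h'
                have := congrArg List.length h'
                rw [List.length_drop] at this
                omega
              have h8 : llt (t.drop s.length) v := hvc.2 _ h6 h7 h5
              have h9 : t = s ++ t.drop s.length := by
                conv_lhs => rw [← List.take_append_drop s.length t, h2]
              rw [h9]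
              exact (llt_append_left _ _ _).2 h8
        · -- t = s₂ ++ v with s₂ a suffix of s
          have hs₂s : s₂ ≠ s := by rintro rfl; exact htsv rfl
          by_cases hs₂nil : s₂ = []
          · -- t = v : show llt v (s ++ v)
            subst hs₂nil
            simp only [List.nil_append]
            have hvw' : v ≠ w := by
              intro h'
              have := congrArg List.length h'
              omega
            have h2 : llt v w := hwc.2 v hvne hvw' ⟨u, huv⟩
            by_cases hcase : v.length ≤ s.length
            · have h3 : llt v ((s ++ v).take v.length) := by
                rw [htake v.length hcase]
                exact (llt_take_iff v w (by omega)).1 h2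
              exact (llt_take_iff v (s ++ v)
                (by simp only [List.length_append]; omega)).2 h3
            · push_neg at hcase
              have hl3 : (v.take s.length).length = s.length := by
                rw [List.length_take]; omega
              have hsplit := llt_split (x := v.take s.length) (y := v.drop s.length) (z := w)
                (by rw [List.take_append_drop]; exact h2) (by rw [hl3]; omega)
              rcases hsplit with h3 | ⟨h3, -⟩
              · have h4 : llt (v.take s.length) (w.take s.length) := by
                  have h4' := (llt_take_iff _ w (by rw [hl3]; omega)).1 h3
                  rwa [hl3] at h4'
                rw [← hsw] at h4
                have h5 : llt (v.take s.length ++ v.drop s.length) (s ++ v) :=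
                  llt_ext _ _ _ _ (by rw [hl3]) h4
                rwa [List.take_append_drop] at h5
              · rw [hl3, ← hsw] at h3
                have h6 : v.drop s.length ≠ [] := by
                  rw [← List.length_pos_iff, List.length_drop]; omega
                have h7 : v.drop s.length ≠ v := by
                  intro h'
                  have := congrArg List.length h'
                  rw [List.length_drop] at this
                  omega
                have h8 : llt (v.drop s.length) v :=
                  hvc.2 _ h6 h7 (List.drop_suffix _ _)
                have h9 : v = s ++ v.drop s.length := by
                  conv_lhs => rw [← List.take_append_drop s.length v, h3]
                conv_lhs => rw [h9]
                exact (llt_append_left _ _ _).2 h8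
          · -- s₂ nonempty proper suffix of s, hence of u, shorter than s: use IH
            have hs₂lt : s₂.length < s.length := by
              rcases lt_or_eq_of_le hs₂.length_le with h | h
              · exact h
              · exact absurd (hs₂.eq_of_length h) hs₂s
            have hs₂u : s₂ <:+ u := hs₂.trans ⟨r, hr⟩
            have hs₂ne_u : s₂ ≠ u := by
              intro h'
              have := congrArg List.length h'
              omega
            have h2 : llt s₂ u := IH s₂.length hs₂lt s₂ rfl hs₂nil hs₂ne_u hs₂u
            have h3 : llt s₂ (u.take s₂.length) :=
              (llt_take_iff s₂ u (by omega)).1 h2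
            have h4 : u.take s₂.length = s.take s₂.length := by
              conv_rhs => rw [hsu']
              rw [List.take_take, min_eq_left (le_of_lt hs₂lt)]
            rw [h4] at h3
            have h5 := llt_ext s₂ (s.take s₂.length) v (s.drop s₂.length ++ v)
              (by rw [List.length_take]; omega) h3
            rwa [← List.append_assoc, List.take_append_drop] at h5
      have hcontra := hmax (s ++ v) hsvne hsvw hsvsuf hls
      simp only [List.length_append] at hcontra
      omega
  rw [isLS_iff_suffix]
  exact ⟨hune, fun s hs hsu hssuf => key s.length s rfl hs hsu hssuf⟩
/-- leading coefficient data: coefficient of `w` is 1, every monomial has the same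
length as `w` and is `≤ w` -/
def Lead (f : FA k X) (w : List X) : Prop :=
  f.coeff (FreeMonoid.ofList w) = 1 ∧
    ∀ m : List X, f.coeff (FreeMonoid.ofList m) ≠ 0 →
      m.length = w.length ∧ (m = w ∨ llt m w)

theorem exists_of_mul_apply_ne {f g : FA k X} {x : FreeMonoid X}
    (h : (f * g).coeff x ≠ 0) :
    ∃ p q : List X, f.coeff (FreeMonoid.ofList p) ≠ 0 ∧ g.coeff (FreeMonoid.ofList q) ≠ 0 ∧
      p ++ q = FreeMonoid.toList x := by
  classical
  by_contra hc
  push_neg at hc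
  apply h
  rw [MonoidAlgebra.mul_apply]
  apply Finset.sum_eq_zero
  intro a₁ ha₁
  apply Finset.sum_eq_zero
  intro a₂ ha₂
  rw [Finsupp.mem_support_iff] at ha₁ ha₂
  dsimp only
  rw [if_neg]
  intro heq
  have h1 : f.coeff (FreeMonoid.ofList (FreeMonoid.toList a₁)) ≠ 0 := by
    rwa [FreeMonoid.ofList_toList]
  have h2 : g.coeff (FreeMonoid.ofList (FreeMonoid.toList a₂)) ≠ 0 := by
    rwa [FreeMonoid.ofList_toList]
  apply hc _ _ h1 h2
  rw [← FreeMonoid.toList_mul, heq]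

theorem mul_apply_split (f g : FA k X) (u v : List X)
    (hf : ∀ m : List X, f.coeff (FreeMonoid.ofList m) ≠ 0 → m.length = u.length) :
    (f * g).coeff (FreeMonoid.ofList (u ++ v)) =
      f.coeff (FreeMonoid.ofList u) * g.coeff (FreeMonoid.ofList v) := by
  classical
  rw [MonoidAlgebra.mul_apply]
  rw [Finsupp.sum_eq_single (FreeMonoid.ofList u)
    (g := fun a₁ b₁ => Finsupp.sum g.coeff fun a₂ b₂ =>
      if a₁ * a₂ = FreeMonoid.ofList (u ++ v) then b₁ * b₂ else 0)]
  · rw [Finsupp.sum_eq_single (FreeMonoid.ofList v)]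
    · rw [if_pos (FreeMonoid.ofList_append u v).symm]
    · intro b hb hbv
      rw [if_neg]
      intro heq
      apply hbv
      have h1 : u ++ FreeMonoid.toList b = u ++ v := by
        have h2 := congrArg FreeMonoid.toList heq
        rwa [FreeMonoid.toList_mul, FreeMonoid.toList_ofList,
          FreeMonoid.toList_ofList] at h2
      have h2 := List.append_cancel_left h1
      rw [← FreeMonoid.ofList_toList b, h2]
    · intro _
      rw [if_pos (FreeMonoid.ofList_append u v).symm, mul_zero]
  · intro b hb hbu
    apply Finset.sum_eq_zero
    intro a₂ ha₂
    dsimp only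
    rw [if_neg]
    intro heq
    apply hbu
    have h1 : FreeMonoid.toList b ++ FreeMonoid.toList a₂ = u ++ v := by
      rw [← FreeMonoid.toList_mul, heq, FreeMonoid.toList_ofList]
    have h2 : (FreeMonoid.toList b).length = u.length := by
      apply hf
      rwa [FreeMonoid.ofList_toList]
    have h3 := (List.append_inj h1 h2).1
    rw [← FreeMonoid.ofList_toList b, h3]
  · intro _
    apply Finset.sum_eq_zero
    intro a₂ ha₂
    dsimp only
    split <;> simp
theorem mword_ne_nil : ∀ t : FreeMagma X, mword t ≠ []
  | .of x => by simp [mword]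
  | .mul a b => fun h => mword_ne_nil a (List.append_eq_nil_iff.1 h).1

theorem lead_single (x : X) :
    Lead k (MonoidAlgebra.single (FreeMonoid.of x) (1 : k)) [x] := by
  constructor
  · rw [FreeMonoid.ofList_singleton, MonoidAlgebra.coeff_single]
    exact Finsupp.single_eq_same
  · intro m hm
    have h1 : FreeMonoid.ofList m = FreeMonoid.of x := by
      by_contra hne
      exact hm (by rw [MonoidAlgebra.coeff_single]; exact Finsupp.single_eq_of_ne' fun h => hne h.symm)
    have hm' : m = [x] := by
      have h2 := congrArg FreeMonoid.toList h1
      rwa [FreeMonoid.toList_ofList, ← FreeMonoid.ofList_singleton,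
        FreeMonoid.toList_ofList] at h2
    subst hm'
    exact ⟨rfl, Or.inl rfl⟩

theorem lead_bracket {f g : FA k X} {u v : List X}
    (hf : Lead k f u) (hg : Lead k g v) (hrot : llt (v ++ u) (u ++ v)) :
    Lead k (f * g - g * f) (u ++ v) := by
  obtain ⟨hf1, hf2⟩ := hf
  obtain ⟨hg1, hg2⟩ := hg
  have haux : ∀ m : List X, (g * f).coeff (FreeMonoid.ofList m) ≠ 0 →
      m.length = u.length + v.length ∧ llt m (u ++ v) := by
    intro m hm
    obtain ⟨p, q, hp, hq, hpq⟩ := exists_of_mul_apply_ne k hm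
    rw [FreeMonoid.toList_ofList] at hpq
    subst hpq
    obtain ⟨hpl, hpo⟩ := hg2 p hp
    obtain ⟨hql, hqo⟩ := hf2 q hq
    constructor
    · simp only [List.length_append]; omega
    · have hle : llt (p ++ q) (v ++ u) ∨ p ++ q = v ++ u := by
        rcases hpo with rfl | hpo
        · rcases hqo with rfl | hqo
          · exact Or.inr rfl
          · exact Or.inl ((llt_append_left p q u).2 hqo)
        · exact Or.inl (llt_ext p v q u (by omega) hpo)
      rcases hle with h | h
      · exact llt_trans _ _ _ h hrot
      · rw [h]; exact hrot
  have hfg : ∀ m : List X, (f * g).coeff (FreeMonoid.ofList m) ≠ 0 →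
      m.length = u.length + v.length ∧ (m = u ++ v ∨ llt m (u ++ v)) := by
    intro m hm
    obtain ⟨p, q, hp, hq, hpq⟩ := exists_of_mul_apply_ne k hm
    rw [FreeMonoid.toList_ofList] at hpq
    subst hpq
    obtain ⟨hpl, hpo⟩ := hf2 p hp
    obtain ⟨hql, hqo⟩ := hg2 q hq
    refine ⟨by simp only [List.length_append]; omega, ?_⟩
    rcases hpo with rfl | hpo
    · rcases hqo with rfl | hqo
      · exact Or.inl rfl
      · exact Or.inr ((llt_append_left p q v).2 hqo)
    · exact Or.inr (llt_ext p u q v (by omega) hpo)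
  have hgf0 : (g * f).coeff (FreeMonoid.ofList (u ++ v)) = 0 := by
    by_contra h0
    exact llt_irrefl _ (haux _ h0).2
  have hfg1 : (f * g).coeff (FreeMonoid.ofList (u ++ v)) = 1 := by
    rw [mul_apply_split k f g u v (fun m hm => (hf2 m hm).1), hf1, hg1, one_mul]
  constructor
  · rw [MonoidAlgebra.coeff_sub, Finsupp.sub_apply, hfg1, hgf0, sub_zero]
  · intro m hm
    rw [MonoidAlgebra.coeff_sub, Finsupp.sub_apply] at hm
    have hor : (f * g).coeff (FreeMonoid.ofList m) ≠ 0 ∨ (g * f).coeff (FreeMonoid.ofList m) ≠ 0 := by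
      by_contra hb
      push_neg at hb
      rw [hb.1, hb.2, sub_zero] at hm
      exact hm rfl
    rcases hor with h | h
    · have h2 := hfg m h
      exact ⟨by rw [h2.1, List.length_append], h2.2⟩
    · have h2 := haux m h
      exact ⟨by rw [h2.1, List.length_append], Or.inr h2.2⟩

theorem lead_evalM : ∀ t : FreeMagma X, IsStd t → Lead k (evalM k t) (mword t)
  | .of x, _ => lead_single k x
  | .mul a b, h => by
      obtain ⟨ha, hb, hls, -, -⟩ := h
      have hrot : llt (mword b ++ mword a) (mword a ++ mword b) :=
        hls.2 (mword a) (mword b) (mword_ne_nil a) (mword_ne_nil b) rfl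
      exact lead_bracket k (lead_evalM a ha) (lead_evalM b hb) hrot
theorem suffix_eq_of_length {s₁ s₂ w : List X} (h₁ : s₁ <:+ w) (h₂ : s₂ <:+ w)
    (h : s₁.length = s₂.length) : s₁ = s₂ := by
  obtain ⟨t₁, e₁⟩ := h₁
  obtain ⟨t₂, e₂⟩ := h₂
  have e3 : t₁ ++ s₁ = t₂ ++ s₂ := e₁.trans e₂.symm
  have hl : t₁.length = t₂.length := by
    have l1 := congrArg List.length e₁
    have l2 := congrArg List.length e₂
    simp only [List.length_append] at l1 l2
    omega
  exact (List.append_inj e3 hl).2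

theorem main_lemma : ∀ n : ℕ, ∀ w : List X, w.length ≤ n → IsLS w →
    ∃ t : FreeMagma X, mword t = w ∧ IsStd t ∧
      (∀ t' : FreeMagma X, mword t' = w → IsStd t' → t' = t) ∧ IsNLS t := by
  intro n
  induction n with
  | zero =>
    intro w h hw
    exact absurd (List.length_eq_zero_iff.1 (Nat.le_zero.1 h)) hw.1
  | succ n IH =>
    intro w hlen hw
    have hwne : w ≠ [] := hw.1
    have hw0 : 0 < w.length := List.length_pos_iff.2 hwne
    rcases eq_or_lt_of_le (Nat.succ_le_of_lt hw0) with h1 | h2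
    · -- length 1
      obtain ⟨x, rfl⟩ := List.length_eq_one_iff.1 h1.symm
      refine ⟨.of x, rfl, trivial, ?_, trivial⟩
      intro t' h1' h2'
      cases t' with
      | of y =>
        have h4 : [y] = [x] := h1'
        simp only [List.cons.injEq, and_true] at h4
        rw [h4]
      | mul a b =>
        exfalso
        have hl := congrArg List.length h1'
        simp only [mword, List.length_append, List.length_cons, List.length_nil] at hl
        have := List.length_pos_iff.2 (mword_ne_nil a)
        have := List.length_pos_iff.2 (mword_ne_nil b)
        omega
    · -- length ≥ 2
      classical
      set P : ℕ → Prop := fun ℓ => 0 < ℓ ∧ ℓ < w.length ∧ IsLS (w.drop (w.length - ℓ)) with hP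
      have hP1 : P 1 := by
        refine ⟨one_pos, h2, isLS_length_one ?_⟩
        rw [List.length_drop]
        omega
      have hPl : P (Nat.findGreatest P (w.length - 1)) :=
        Nat.findGreatest_spec (m := 1) (by omega) hP1
      set ℓ := Nat.findGreatest P (w.length - 1) with hℓ
      obtain ⟨hl0, hlw, hvls⟩ := hPl
      set v : List X := w.drop (w.length - ℓ) with hvdef
      set u : List X := w.take (w.length - ℓ) with hudef
      have huv : u ++ v = w := List.take_append_drop _ _
      have hvlen : v.length = ℓ := by
        rw [hvdef, List.length_drop]; omega
      have hulen : u.length = w.length - ℓ := by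
        rw [hudef, List.length_take]; omega
      have hune : u ≠ [] := by
        rw [← List.length_pos_iff, hulen]; omega
      have hvne : v ≠ [] := hvls.1
      have hmax : ∀ s : List X, s ≠ [] → s ≠ w → s <:+ w → IsLS s → s.length ≤ v.length := by
        intro s hs1 hs2 hs3 hs4
        have hsl : s.length < w.length :=
          lt_of_le_of_ne hs3.length_le fun h => hs2 (hs3.eq_of_length h)
        have hs0 : 0 < s.length := List.length_pos_iff.2 hs1
        have hdrop : w.drop (w.length - s.length) = s := by
          obtain ⟨t, ht⟩ := hs3
          have h5 : w.drop t.length = s := by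
            rw [← ht, List.drop_left]
          have h6 : t.length = w.length - s.length := by
            have := congrArg List.length ht
            simp only [List.length_append] at this
            omega
          rw [← h6]
          exact h5
        have hPs : P s.length := ⟨hs0, hsl, by rw [hdrop]; exact hs4⟩
        have := Nat.le_findGreatest (m := s.length) (n := w.length - 1) (by omega) hPs
        omega
      have hu : IsLS u := isLS_left_factor hw hvls huv hune hmax
      have hul2 : u.length ≤ n := by
        have := congrArg List.length huv
        simp only [List.length_append] at this
        have := List.length_pos_iff.2 hvne
        omega
      have hvl2 : v.length ≤ n := by
        have := congrArg List.length huv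
        simp only [List.length_append] at this
        have := List.length_pos_iff.2 hune
        omega
      obtain ⟨a, haw, hastd, hauniq, hanls⟩ := IH u hul2 hu
      obtain ⟨b, hbw, hbstd, hbuniq, hbnls⟩ := IH v hvl2 hvls
      have hmw : mword (FreeMagma.mul a b) = w := by
        show mword a ++ mword b = w
        rw [haw, hbw, huv]
      have hstd : IsStd (FreeMagma.mul a b) := by
        refine ⟨hastd, hbstd, ?_, ?_, ?_⟩
        · rw [haw, hbw, huv]; exact hw
        · rw [hbw]; exact hvls
        · intro s hs1 hs2 hs3 hs4
          rw [haw, hbw, huv] at hs2 hs3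
          rw [hbw]
          exact hmax s hs1 hs2 hs3 hs4
      refine ⟨.mul a b, hmw, hstd, ?_, ?_⟩
      · -- uniqueness
        intro t' ht'w ht'std
        cases t' with
        | of y =>
          exfalso
          have hl := congrArg List.length ht'w
          simp only [mword, List.length_cons, List.length_nil] at hl
          omega
        | mul a' b' =>
          obtain ⟨ha'std, hb'std, hls', hlsb', hmax''⟩ := ht'std
          have ht'w' : mword a' ++ mword b' = w := ht'w
          have hb'suf : mword b' <:+ w := ⟨mword a', ht'w'⟩
          have hb'new : mword b' ≠ w := by
            intro h'
            have l1 := congrArg List.length ht'w'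
            have l2 := congrArg List.length h'
            simp only [List.length_append] at l1
            have := List.length_pos_iff.2 (mword_ne_nil a')
            omega
          have h1 : (mword b').length ≤ v.length :=
            hmax (mword b') (mword_ne_nil b') hb'new hb'suf hlsb'
          have h2 : v.length ≤ (mword b').length := by
            apply hmax'' v hvne
            · rw [ht'w']
              intro h'
              have := congrArg List.length huv
              simp only [List.length_append] at this
              have := List.length_pos_iff.2 hune
              have := congrArg List.length h'
              omega
            · rw [ht'w']
              exact ⟨u, huv⟩
            · exact hvls
          have hb'v : mword b' = v :=
            suffix_eq_of_length hb'suf ⟨u, huv⟩ (le_antisymm h1 h2)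
          have ha'u : mword a' = u := by
            apply List.append_cancel_right (bs := v)
            rw [← hb'v, ht'w', ← huv, hb'v]
          have ha' : a' = a := hauniq a' ha'u ha'std
          have hb' : b' = b := hbuniq b' hb'v hb'std
          rw [ha', hb']
      · -- IsNLS
        refine ⟨hanls, hbnls, ?_, ?_⟩
        · rw [haw, hbw, huv]; exact hw
        · cases a with
          | of x => trivial
          | mul a1 a2 =>
            show ¬ llt (mword b) (mword a2)
            intro hllt
            rw [hbw] at hllt
            obtain ⟨-, -, -, hlsa2, -⟩ := hastd
            have hls2 : IsLS (mword a2 ++ v) := isLS_append hlsa2 hvls hllt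
            have hsuf2 : mword a2 ++ v <:+ w := by
              refine ⟨mword a1, ?_⟩
              rw [← List.append_assoc]
              have : mword a1 ++ mword a2 = u := haw
              rw [this, huv]
            have ha1pos := List.length_pos_iff.2 (mword_ne_nil a1)
            have ha2pos := List.length_pos_iff.2 (mword_ne_nil a2)
            have hlenu : (mword a1).length + (mword a2).length = u.length := by
              have h7 : mword a1 ++ mword a2 = u := haw
              have h8 := congrArg List.length h7
              simpa using h8
            have hne2 : mword a2 ++ v ≠ w := by
              intro h'
              have := congrArg List.length h'
              simp only [List.length_append] at this
              have := congrArg List.length huv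
              simp only [List.length_append] at this
              omega
            have := hmax (mword a2 ++ v) (by simp [mword_ne_nil a2]) hne2 hsuf2 hls2
            simp only [List.length_append] at this
            omega

/-- For every associative Lyndon--Shirshov word `w` there is a (unique) standard
bracketing `t` of `w` (obtained by recursively bracketing off the longest proper
Lyndon--Shirshov suffix); it is a nonassociative Lyndon--Shirshov word, and its
commutator expansion in the free associative algebra has deg-lex leading
monomial `w` with coefficient 1. -/
theorem stmt_7 (w : List X) (hw : IsLS w) :
    ∃ t : FreeMagma X, mword t = w ∧ IsStd t ∧
      (∀ t' : FreeMagma X, mword t' = w → IsStd t' → t' = t) ∧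
      IsNLS t ∧ (evalM k t).coeff (FreeMonoid.ofList w) = 1 ∧ IsLeading k (evalM k t) w := by
  obtain ⟨t, h1, h2, h3, h4⟩ := main_lemma w.length w le_rfl hw
  have hl := lead_evalM k t h2
  rw [h1] at hl
  refine ⟨t, h1, h2, h3, h4, hl.1, ?_, ?_⟩
  · rw [hl.1]
    exact one_ne_zero
  · intro m hm
    obtain ⟨hml, hmo⟩ := hl.2 m hm
    rcases hmo with h | h
    · exact Or.inl h
    · exact Or.inr (Or.inr ⟨hml, h⟩)
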